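/- Let H be the graph constructed from G and k as above, and let A* ⊆ E be a set of at most k(k-1)/2 edges of G added to H. Then the resulting graph (V', E' ∪ A*) contains at least k nodes whose degree strictly exceeds the degree of v_e if and only if G contains a clique on k vertices whose edge set is contained in A*. -/

import Mathlib

abbrev HVert {V : Type*} [Fintype V] (G : SimpleGraph V) [DecidableRel G.Adj] (k : ℕ) :=
  Unit ⊕ V ⊕ (Σ v : V, Fin (G.degree v)) ⊕ Fin (k - 2)

def Hgraph {V : Type*} [Fintype V] (G : SimpleGraph V) [DecidableRel G.Adj] (k : ℕ) :
    SimpleGraph (HVert G k) :=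
  SimpleGraph.fromRel (fun a b =>
    match a, b with
    | Sum.inl _, Sum.inr (Sum.inl _) => True
    | Sum.inr (Sum.inl v), Sum.inr (Sum.inr (Sum.inl ⟨w, _⟩)) => v = w
    | Sum.inl _, Sum.inr (Sum.inr (Sum.inr _)) => True
    | Sum.inr (Sum.inl v), Sum.inr (Sum.inl w) => ¬ G.Adj v w
    | _, _ => False)

def origEmb {V : Type*} [Fintype V] (G : SimpleGraph V) [DecidableRel G.Adj] (k : ℕ) :
    V ↪ HVert G k :=
  ⟨fun v => Sum.inr (Sum.inl v), fun a b h => by simpa using h⟩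

section Aux

set_option linter.unusedSectionVars false

lemma aux_ncard_range {α β : Type*} [Fintype α] (f : α → β) (hf : Function.Injective f) :
    (Set.range f).ncard = Fintype.card α := by
  rw [← Set.image_univ, Set.ncard_image_of_injective _ hf, Set.ncard_univ,
    Nat.card_eq_fintype_card]

variable {V : Type*} [Fintype V] [DecidableEq V] (G : SimpleGraph V) [DecidableRel G.Adj]
  (k : ℕ) (A : SimpleGraph V)

omit [DecidableEq V] in
@[simp] lemma origEmb_apply (v : V) : origEmb G k v = Sum.inr (Sum.inl v) := rfl

lemma aux_nbr_ve : ((Hgraph G k) ⊔ A.map (origEmb G k)).neighborSet (Sum.inl ()) =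
    Set.range (fun v : V => Sum.inr (Sum.inl v)) ∪
    Set.range (fun i : Fin (k-2) => Sum.inr (Sum.inr (Sum.inr i))) := by
  ext x
  rcases x with _ | (v | (⟨w, j⟩ | i)) <;>
    simp [Hgraph, SimpleGraph.fromRel_adj, origEmb, SimpleGraph.map_adj]

lemma aux_nbr_orig (v : V) :
    ((Hgraph G k) ⊔ A.map (origEmb G k)).neighborSet (Sum.inr (Sum.inl v)) =
    {Sum.inl ()} ∪ (fun w : V => Sum.inr (Sum.inl w)) '' {w | (w ≠ v ∧ ¬ G.Adj v w) ∨ A.Adj v w}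
      ∪ Set.range (fun j : Fin (G.degree v) => Sum.inr (Sum.inr (Sum.inl ⟨v, j⟩))) := by
  ext x
  rcases x with _ | (w | (⟨w, j⟩ | i)) <;>
    simp [Hgraph, SimpleGraph.fromRel_adj, origEmb_apply, SimpleGraph.map_adj]
  · constructor
    · rintro (⟨hne, h⟩ | h)
      · exact Or.inl ⟨Ne.symm hne, h.elim id (fun hh hvw => hh hvw.symm)⟩
      · exact Or.inr h
    · rintro (⟨hne, h⟩ | h)
      · exact Or.inl ⟨Ne.symm hne, Or.inl h⟩
      · exact Or.inr h
  · rintro rfl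
    exact ⟨j, HEq.rfl⟩

lemma aux_nbr_pendx (w : V) (j : Fin (G.degree w)) :
    ((Hgraph G k) ⊔ A.map (origEmb G k)).neighborSet (Sum.inr (Sum.inr (Sum.inl ⟨w, j⟩))) =
    {Sum.inr (Sum.inl w)} := by
  ext x
  rcases x with _ | (u | (⟨u, j'⟩ | i)) <;>
    simp [Hgraph, SimpleGraph.fromRel_adj, origEmb_apply, SimpleGraph.map_adj, eq_comm]

lemma aux_nbr_pendz (i : Fin (k - 2)) :
    ((Hgraph G k) ⊔ A.map (origEmb G k)).neighborSet (Sum.inr (Sum.inr (Sum.inr i))) =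
    {Sum.inl ()} := by
  ext x
  rcases x with _ | (u | (⟨u, j'⟩ | i')) <;>
    simp [Hgraph, SimpleGraph.fromRel_adj, origEmb_apply, SimpleGraph.map_adj]

lemma aux_ncard_ve :
    (((Hgraph G k) ⊔ A.map (origEmb G k)).neighborSet (Sum.inl ())).ncard =
    Fintype.card V + (k - 2) := by
  rw [aux_nbr_ve, Set.ncard_union_eq (by
    rw [Set.disjoint_left]; rintro x ⟨v, rfl⟩ ⟨i, h⟩; simp at h),
    aux_ncard_range _ (fun a b h => by simpa using h),
    aux_ncard_range _ (fun a b h => by simpa using h), Fintype.card_fin]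

lemma aux_ncard_nbrSet (B : SimpleGraph V) [DecidableRel B.Adj] (v : V) :
    (B.neighborSet v).ncard = B.degree v := by
  rw [Set.ncard_eq_toFinset_card', Set.toFinset_card, SimpleGraph.card_neighborSet_eq_degree]

lemma aux_ncard_orig [DecidableRel A.Adj] (hAG : A ≤ G) (v : V) :
    (((Hgraph G k) ⊔ A.map (origEmb G k)).neighborSet (Sum.inr (Sum.inl v))).ncard =
    Fintype.card V + A.degree v := by
  classical
  rw [aux_nbr_orig]
  have hf : Function.Injective (fun w : V => (Sum.inr (Sum.inl w) : HVert G k)) :=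
    fun a b h => by simpa using h
  set B : Set V := {w | w ≠ v ∧ ¬ G.Adj v w} with hB
  set C : Set V := {w | A.Adj v w} with hC
  set D : Set V := {w | G.Adj v w ∧ ¬ A.Adj v w} with hD
  have hBC : Disjoint B C := by
    rw [Set.disjoint_left]; rintro w ⟨_, hw⟩ hw'; exact hw (hAG hw')
  have hBD : Disjoint B D := by
    rw [Set.disjoint_left]; rintro w ⟨_, hw⟩ ⟨hw', _⟩; exact hw hw'
  have hCD : Disjoint C D := by
    rw [Set.disjoint_left]; rintro w hw ⟨_, hw'⟩; exact hw' hw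
  have hvB : (v : V) ∉ B ∪ C ∪ D := by
    rintro ((⟨h, _⟩ | h) | ⟨h, _⟩)
    exacts [h rfl, A.irrefl h, G.irrefl h]
  have huniv : insert v (B ∪ C ∪ D) = (Set.univ : Set V) := by
    ext w
    simp only [Set.mem_insert_iff, Set.mem_union, hB, hC, hD, Set.mem_setOf_eq,
      Set.mem_univ, iff_true]
    by_cases hw : w = v
    · exact Or.inl hw
    · by_cases h2 : A.Adj v w
      · exact Or.inr (Or.inl (Or.inr h2))
      · by_cases h1 : G.Adj v w
        · exact Or.inr (Or.inr ⟨h1, h2⟩)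
        · exact Or.inr (Or.inl (Or.inl ⟨hw, h1⟩))
  have hcard : 1 + (B.ncard + C.ncard + D.ncard) = Fintype.card V := by
    have h := congrArg Set.ncard huniv
    rw [Set.ncard_insert_of_notMem hvB,
      Set.ncard_union_eq (Set.disjoint_union_left.mpr ⟨hBD, hCD⟩),
      Set.ncard_union_eq hBC, Set.ncard_univ, Nat.card_eq_fintype_card] at h
    omega
  have hT : {w | (w ≠ v ∧ ¬ G.Adj v w) ∨ A.Adj v w} = B ∪ C := by
    ext w; simp [hB, hC]
  have hdegG : G.degree v = C.ncard + D.ncard := by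
    have hns : G.neighborSet v = C ∪ D := by
      ext w
      simp only [SimpleGraph.mem_neighborSet, Set.mem_union, hC, hD, Set.mem_setOf_eq]
      constructor
      · intro h
        by_cases h2 : A.Adj v w
        exacts [Or.inl h2, Or.inr ⟨h, h2⟩]
      · rintro (h | ⟨h, _⟩)
        exacts [hAG h, h]
    rw [← aux_ncard_nbrSet G, hns, Set.ncard_union_eq hCD]
  have hdegA : A.degree v = C.ncard := (aux_ncard_nbrSet A v).symm
  rw [Set.ncard_union_eq (by
      rw [Set.disjoint_left]; rintro x (h | ⟨w, _, rfl⟩) ⟨j, hj⟩ <;> simp_all),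
    Set.ncard_union_eq (by
      rw [Set.disjoint_left]; rintro x h ⟨w, _, rfl⟩; simp_all),
    Set.ncard_singleton, aux_ncard_range _ (fun a b h => by simpa using h),
    Fintype.card_fin, Set.ncard_image_of_injective _ hf, hT,
    Set.ncard_union_eq hBC, hdegG, hdegA]
  omega

lemma aux_comb [DecidableRel A.Adj] (hk : 2 ≤ k) (hAG : A ≤ G)
    (hA : A.edgeFinset.card ≤ k * (k - 1) / 2) :
    (k ≤ (Finset.univ.filter (fun v => k - 2 < A.degree v)).card) ↔
      ∃ s : Finset V, s.card = k ∧ G.IsClique ↑s ∧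
        ∀ v ∈ s, ∀ w ∈ s, v ≠ w → A.Adj v w := by
  set S := Finset.univ.filter (fun v => k - 2 < A.degree v) with hSdef
  have hdegS : ∀ v ∈ S, k - 1 ≤ A.degree v := by
    intro v hv
    have := (Finset.mem_filter.mp hv).2
    omega
  constructor
  · intro hS
    have h1 : k * (k-1) ≤ S.card * (k-1) := Nat.mul_le_mul hS le_rfl
    have h2 : S.card * (k-1) ≤ ∑ v ∈ S, A.degree v := by
      simpa [smul_eq_mul] using Finset.card_nsmul_le_sum S _ _ hdegS
    have h3 : ∑ v ∈ S, A.degree v ≤ ∑ v : V, A.degree v :=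
      Finset.sum_le_sum_of_subset (Finset.subset_univ S)
    have h4 : ∑ v : V, A.degree v = 2 * A.edgeFinset.card :=
      SimpleGraph.sum_degrees_eq_twice_card_edges A
    have h5 : 2 * A.edgeFinset.card ≤ k * (k-1) := by
      calc 2 * A.edgeFinset.card ≤ 2 * (k * (k-1) / 2) := by omega
      _ = k * (k-1) / 2 * 2 := by ring
      _ ≤ k * (k-1) := Nat.div_mul_le_self _ _
    have e3 : ∑ v : V, A.degree v = k * (k-1) := le_antisymm (h4 ▸ h5) (h1.trans (h2.trans h3))
    have e2 : ∑ v ∈ S, A.degree v = k * (k-1) := le_antisymm (h3.trans e3.le) (h1.trans h2)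
    have eSc : S.card = k := by
      have hkpos : 0 < k - 1 := by omega
      exact le_antisymm (Nat.le_of_mul_le_mul_right (h2.trans e2.le) hkpos) hS
    have hzero : ∀ v ∉ S, A.degree v = 0 := by
      have hsd : ∑ v ∈ Finset.univ \ S, A.degree v + ∑ v ∈ S, A.degree v = ∑ v : V, A.degree v :=
        Finset.sum_sdiff (Finset.subset_univ S)
      have h0 : ∑ v ∈ Finset.univ \ S, A.degree v = 0 := by omega
      intro v hv
      exact Finset.sum_eq_zero_iff.mp h0 v (Finset.mem_sdiff.mpr ⟨Finset.mem_univ v, hv⟩)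
    have hadj : ∀ v ∈ S, ∀ w ∈ S, v ≠ w → A.Adj v w := by
      intro v hv w hw hvw
      have hsub : A.neighborFinset v ⊆ S.erase v := by
        intro u hu
        rw [A.mem_neighborFinset] at hu
        refine Finset.mem_erase.mpr ⟨fun h => A.irrefl (h ▸ hu), ?_⟩
        by_contra hus
        have hupos : 0 < A.degree u := by
          rw [← SimpleGraph.card_neighborFinset_eq_degree, Finset.card_pos]
          exact ⟨v, (A.mem_neighborFinset u v).mpr hu.symm⟩
        have := hzero u hus
        omega
      have hcards : (S.erase v).card ≤ A.degree v := by
        have h := Finset.card_erase_of_mem hv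
        have := hdegS v hv
        omega
      have heq : A.neighborFinset v = S.erase v :=
        Finset.eq_of_subset_of_card_le hsub (by
          rwa [SimpleGraph.card_neighborFinset_eq_degree])
      have hwmem : w ∈ A.neighborFinset v := heq ▸ Finset.mem_erase.mpr ⟨hvw.symm, hw⟩
      exact (A.mem_neighborFinset v w).mp hwmem
    refine ⟨S, eSc, ?_, hadj⟩
    intro v hv w hw hvw
    exact hAG (hadj v hv w hw hvw)
  · rintro ⟨s, hcard, hclique, hadj⟩
    have hsub : s ⊆ S := by
      intro v hv
      have : s.erase v ⊆ A.neighborFinset v := by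
        intro w hw
        rw [A.mem_neighborFinset]
        exact hadj v hv w (Finset.mem_of_mem_erase hw) (Ne.symm (Finset.ne_of_mem_erase hw))
      have h1 : (s.erase v).card ≤ A.degree v := by
        rw [← SimpleGraph.card_neighborFinset_eq_degree]
        exact Finset.card_le_card this
      have h2 := Finset.card_erase_of_mem hv
      refine Finset.mem_filter.mpr ⟨Finset.mem_univ v, ?_⟩
      omega
    calc k = s.card := hcard.symm
    _ ≤ S.card := Finset.card_le_card hsub

end Aux

theorem clique_iff_k_nodes_exceed {V : Type*} [Fintype V] [DecidableEq V]
    (G : SimpleGraph V) [DecidableRel G.Adj] (k : ℕ) (hk : 2 ≤ k)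
    (A : SimpleGraph V) (hAG : A ≤ G) (hA : A.edgeSet.ncard ≤ k * (k - 1) / 2) :
    (k ≤ {x : HVert G k |
        (((Hgraph G k) ⊔ A.map (origEmb G k)).neighborSet (Sum.inl ())).ncard <
        (((Hgraph G k) ⊔ A.map (origEmb G k)).neighborSet x).ncard}.ncard) ↔
      ∃ s : Finset V, s.card = k ∧ G.IsClique ↑s ∧
        ∀ v ∈ s, ∀ w ∈ s, v ≠ w → A.Adj v w := by
  classical
  have hset : {x : HVert G k |
        (((Hgraph G k) ⊔ A.map (origEmb G k)).neighborSet (Sum.inl ())).ncard <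
        (((Hgraph G k) ⊔ A.map (origEmb G k)).neighborSet x).ncard} =
      (fun v : V => (Sum.inr (Sum.inl v) : HVert G k)) ''
        {v : V | k - 2 < A.degree v} := by
    ext x
    rcases x with ⟨⟩ | (v | (⟨w, j⟩ | i))
    · simp [Set.mem_setOf_eq, lt_irrefl]
    · simp only [Set.mem_setOf_eq, aux_ncard_ve, aux_ncard_orig G k A hAG v, Set.mem_image]
      constructor
      · intro h; exact ⟨v, by omega, rfl⟩
      · rintro ⟨u, hu, h⟩
        simp only [Sum.inr.injEq, Sum.inl.injEq] at h
        subst h; omega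
    · have hn : 1 ≤ Fintype.card V := Fintype.card_pos_iff.mpr ⟨w⟩
      simp [Set.mem_setOf_eq, aux_ncard_ve, aux_nbr_pendx, Set.ncard_singleton, -SimpleGraph.neighborSet_sup]
      omega
    · have hkk : 0 < k - 2 := i.pos
      simp [Set.mem_setOf_eq, aux_ncard_ve, aux_nbr_pendz, Set.ncard_singleton, -SimpleGraph.neighborSet_sup]
      omega
  rw [hset, Set.ncard_image_of_injective _ (fun a b h => by simpa using h)]
  have hsetF : {v : V | k - 2 < A.degree v} =
      ↑(Finset.univ.filter (fun v => k - 2 < A.degree v)) := by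
    ext v; simp
  rw [hsetF, Set.ncard_coe_finset]
  have hE : A.edgeFinset.card ≤ k * (k - 1) / 2 := by
    rwa [Set.ncard_eq_toFinset_card'] at hA
  exact aux_comb G k A hk hAG hE
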